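/- For every ground HDLP Π there exists a unique maximal (with respect to set inclusion) subset R* ⊆ Π that is potentially applicable; that is, R* is potentially applicable, and every potentially applicable subset R ⊆ Π satisfies R ⊆ R*. -/

import Mathlib

open scoped Classical

namespace ASP

universe u v

/-- A ground literal: an atom together with a sign
(`true` for the atom itself, `false` for its strong negation `¬a`).
The atom `|l|` of a literal `l` is its first component `l.1`. -/
abbrev Lit (α : Type u) : Type u := α × Bool

/-- A ground disjunctive rule, consisting of three finite sets of literals:
head, positive body and negative body. -/
structure Rule (α : Type u) : Type u where
  head : Finset (Lit α)
  pbody : Finset (Lit α)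
  nbody : Finset (Lit α)
deriving DecidableEq

variable {α : Type u}

/-- A set of literals is consistent if it contains no atom together with
its strong negation. -/
def Consistent (S : Set (Lit α)) : Prop :=
  ∀ a : α, ¬((a, true) ∈ S ∧ (a, false) ∈ S)

/-- `S` satisfies a rule `r`: the head intersects `S` whenever
`pbody(r) ⊆ S` and `nbody(r) ∩ S = ∅`. -/
def SatRule (S : Set (Lit α)) (r : Rule α) : Prop :=
  ((∀ l ∈ r.pbody, l ∈ S) ∧ (∀ l ∈ r.nbody, l ∉ S)) → ∃ l ∈ r.head, l ∈ S

/-- Answer sets of a positive program: `⊆`-minimal consistent sets of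
literals satisfying all rules. -/
def IsAnswerSetPos (P : Set (Rule α)) (S : Set (Lit α)) : Prop :=
  Consistent S ∧ (∀ r ∈ P, SatRule S r) ∧
    ∀ T : Set (Lit α), Consistent T → (∀ r ∈ P, SatRule T r) → T ⊆ S → T = S

/-- The reduct `P^S` of a program w.r.t. a set of literals `S`. -/
def reduct (P : Set (Rule α)) (S : Set (Lit α)) : Set (Rule α) :=
  {x | ∃ r ∈ P, (∀ l ∈ r.nbody, l ∉ S) ∧ x = ⟨r.head, r.pbody, ∅⟩}

/-- `S` is an answer set of `P` iff `S` is an answer set of the positive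
program `P^S`. -/
def IsAnswerSet (P : Set (Rule α)) (S : Set (Lit α)) : Prop :=
  IsAnswerSetPos (reduct P S) S

/-- `Lit(P)`: the literals occurring in a program. -/
def litsOf (P : Set (Rule α)) : Set (Lit α) :=
  {l | ∃ r ∈ P, l ∈ r.head ∨ l ∈ r.pbody ∨ l ∈ r.nbody}

/-- Edges of the positive dependency graph: from each head literal of a
rule to each of its positive body literals. -/
def DepEdge (P : Set (Rule α)) (l l' : Lit α) : Prop :=
  ∃ r ∈ P, l ∈ r.head ∧ l' ∈ r.pbody

/-- Head-cycle freeness: no two distinct literals occurring together in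
some rule head lie on a common cycle of the positive dependency graph. -/
def HeadCycleFree (P : Set (Rule α)) : Prop :=
  ∀ r ∈ P, ∀ l ∈ r.head, ∀ l' ∈ r.head, l ≠ l' →
    ¬(Relation.ReflTransGen (DepEdge P) l l' ∧ Relation.ReflTransGen (DepEdge P) l' l)

/-- `P ∪ S`: the program `P` extended with the literals of `S` as facts. -/
def withFacts (P : Set (Rule α)) (S : Set (Lit α)) : Set (Rule α) :=
  P ∪ {x | ∃ l ∈ S, x = ⟨{l}, ∅, ∅⟩}

/-- A set `R` of ground rules is potentially applicable if it admits an
enumeration `⟨r_i⟩_{i ∈ I}` (without repetitions), where `I` is a prefix of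
`ℕ` or `I = ℕ`, such that `pbody(r_i) ⊆ ⋃_{j<i} head(r_j)` for all `i ∈ I`. -/
def PotentiallyApplicable (R : Set (Rule α)) : Prop :=
  ∃ (I : Set ℕ) (e : ℕ → Rule α),
    (∀ i ∈ I, ∀ j, j ≤ i → j ∈ I) ∧
    (∀ i ∈ I, e i ∈ R) ∧
    (∀ r ∈ R, ∃ i ∈ I, e i = r) ∧
    (∀ i ∈ I, ∀ j ∈ I, e i = e j → i = j) ∧
    (∀ i ∈ I, ∀ l ∈ (e i).pbody, ∃ j ∈ I, j < i ∧ l ∈ (e j).head)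


/-- Stages of the least fixpoint of derivable literals of `P`. -/
def stage (P : Set (Rule α)) : ℕ → Set (Lit α)
  | 0 => ∅
  | n+1 => {l | ∃ r ∈ P, (∀ l' ∈ r.pbody, l' ∈ stage P n) ∧ l ∈ r.head}

lemma stage_mono (P : Set (Rule α)) : ∀ {m n : ℕ}, m ≤ n → stage P m ⊆ stage P n := by
  have key : ∀ n, stage P n ⊆ stage P (n+1) := by
    intro n
    induction n with
    | zero => intro l h; exact h.elim
    | succ n ih =>
      rintro l ⟨r, hr, hb, hl⟩
      exact ⟨r, hr, fun l' hl' => ih (hb l' hl'), hl⟩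
  intro m n h
  induction h with
  | refl => exact subset_rfl
  | step _ ih => exact fun x hx => key _ (ih hx)

/-- The maximal potentially applicable subset: rules whose positive body
is contained in some stage. -/
def Rstar (P : Set (Rule α)) : Set (Rule α) :=
  {r | r ∈ P ∧ ∃ n, ∀ l ∈ r.pbody, l ∈ stage P n}

noncomputable def rank (P : Set (Rule α)) (r : Rule α) : ℕ :=
  sInf {n | ∀ l ∈ r.pbody, l ∈ stage P n}

lemma pbody_stage_rank (P : Set (Rule α)) {r : Rule α} (hr : r ∈ Rstar P) :
    ∀ l ∈ r.pbody, l ∈ stage P (rank P r) :=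
  Nat.sInf_mem hr.2

lemma lit_rule (P : Set (Rule α)) {l : Lit α} {n : ℕ} (hl : l ∈ stage P n) :
    ∃ r ∈ Rstar P, l ∈ r.head ∧ rank P r < n := by
  cases n with
  | zero => exact hl.elim
  | succ n =>
    obtain ⟨r, hr, hb, hl⟩ := hl
    exact ⟨r, ⟨hr, n, hb⟩, hl, lt_of_le_of_lt (Nat.sInf_le hb) (Nat.lt_succ_self n)⟩

lemma exists_stage_bound (P : Set (Rule α)) (s : Finset (Lit α))
    (h : ∀ l ∈ s, ∃ n, l ∈ stage P n) : ∃ n, ∀ l ∈ s, l ∈ stage P n := by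
  classical
  induction s using Finset.induction with
  | empty => exact ⟨0, by simp⟩
  | insert _ _ hl ih =>
    rename_i a s'
    obtain ⟨n, hn⟩ := ih (fun l hl' => h l (Finset.mem_insert_of_mem hl'))
    obtain ⟨m, hm⟩ := h _ (Finset.mem_insert_self a s')
    refine ⟨max n m, ?_⟩
    intro l hl'
    rcases Finset.mem_insert.1 hl' with rfl | hl'
    · exact stage_mono P (le_max_right n m) hm
    · exact stage_mono P (le_max_left n m) (hn l hl')

/-- Every ground HDLP `P` has a unique maximal potentially applicable
subset `R*`: `R*` is potentially applicable and every potentially applicable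
subset of `P` is contained in `R*`. -/
theorem statement6 {α : Type u} (P : Set (Rule α)) (hfin : P.Finite)
    (hhcf : HeadCycleFree P) :
    ∃! Rstar : Set (Rule α),
      Rstar ⊆ P ∧ PotentiallyApplicable Rstar ∧
        ∀ R : Set (Rule α), R ⊆ P → PotentiallyApplicable R → R ⊆ Rstar := by
  classical
  have hsub : Rstar P ⊆ P := fun r hr => hr.1
  have hfinR : (Rstar P).Finite := hfin.subset hsub
  -- an enumeration of Rstar sorted by rank
  set L : List (Rule α) :=
    hfinR.toFinset.toList.mergeSort (fun a b => decide (rank P a ≤ rank P b)) with hLdef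
  have hperm : L.Perm hfinR.toFinset.toList := List.mergeSort_perm _ _
  have hmemL : ∀ r : Rule α, r ∈ L ↔ r ∈ Rstar P := by
    intro r
    rw [hperm.mem_iff, Finset.mem_toList, Set.Finite.mem_toFinset]
  have hnd : L.Nodup := hperm.nodup_iff.2 (Finset.nodup_toList _)
  have hsorted : List.Pairwise (fun a b => rank P a ≤ rank P b) L := by
    have := List.pairwise_mergeSort
      (le := fun a b : Rule α => decide (rank P a ≤ rank P b))
      (by intro a b c hab hbc; simp only [decide_eq_true_eq] at *; omega)
      (by intro a b; simpa using le_total (rank P a) (rank P b))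
      hfinR.toFinset.toList
    rw [← hLdef] at this
    exact this.imp (by simp)
  set e : ℕ → Rule α := fun i => L.getD i ⟨∅, ∅, ∅⟩ with hedef
  have he : ∀ {i : ℕ} (hi : i < L.length), e i = L[i] := fun hi => List.getD_eq_getElem L _ hi
  set I : Set ℕ := {i | i < L.length} with hIdef
  have hmem : ∀ i ∈ I, e i ∈ Rstar P := by
    intro i hi
    rw [he hi]
    exact (hmemL _).1 (List.getElem_mem hi)
  have hpa : PotentiallyApplicable (Rstar P) := by
    refine ⟨I, e, ?_, hmem, ?_, ?_, ?_⟩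
    · exact fun i hi j hj => lt_of_le_of_lt hj hi
    · intro r hr
      obtain ⟨⟨i, hi⟩, hg⟩ := List.mem_iff_get.1 ((hmemL r).2 hr)
      exact ⟨i, hi, by rw [he hi]; exact hg⟩
    · intro i hi j hj hij
      rw [he hi, he hj] at hij
      exact (hnd.getElem_inj_iff).1 hij
    · intro i hi l hl
      have hri : e i ∈ Rstar P := hmem i hi
      have hls : l ∈ stage P (rank P (e i)) := pbody_stage_rank P hri l hl
      obtain ⟨r', hr', hlr', hrank⟩ := lit_rule P hls
      obtain ⟨⟨j, hj⟩, hg⟩ := List.mem_iff_get.1 ((hmemL r').2 hr')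
      have hej : e j = r' := by rw [he hj]; exact hg
      refine ⟨j, hj, ?_, hej ▸ hlr'⟩
      by_contra hji
      push_neg at hji
      rcases lt_or_eq_of_le hji with hlt | heq
      · have := (List.pairwise_iff_get.1 hsorted) ⟨i, hi⟩ ⟨j, hj⟩ hlt
        simp only [List.get_eq_getElem, ← he hi, ← he hj, hej] at this
        omega
      · have : e i = r' := heq ▸ hej
        rw [this] at hrank
        omega
  have hmax : ∀ R : Set (Rule α), R ⊆ P → PotentiallyApplicable R → R ⊆ Rstar P := by
    intro R hR hpaR
    obtain ⟨I', e', _, hmem', hsurj', _, happ'⟩ := hpaR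
    have key : ∀ i, i ∈ I' → e' i ∈ Rstar P := by
      intro i
      induction i using Nat.strong_induction_on with
      | _ i ih =>
        intro hi
        have hb : ∀ l ∈ (e' i).pbody, ∃ n, l ∈ stage P n := by
          intro l hl
          obtain ⟨j, hj, hji, hlj⟩ := happ' i hi l hl
          have hj' : e' j ∈ Rstar P := ih j hji hj
          exact ⟨rank P (e' j) + 1, ⟨e' j, hj'.1, pbody_stage_rank P hj', hlj⟩⟩
        obtain ⟨n, hn⟩ := exists_stage_bound P _ hb
        exact ⟨hR (hmem' i hi), n, hn⟩
    intro r hr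
    obtain ⟨i, hi, hei⟩ := hsurj' r hr
    exact hei ▸ key i hi
  refine ⟨Rstar P, ⟨hsub, hpa, hmax⟩, ?_⟩
  rintro R' ⟨h1, h2, h3⟩
  exact Set.Subset.antisymm (hmax R' h1 h2) (h3 _ hsub hpa)

end ASP
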